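/- Characterization of non-isotropic Lipschitz spaces via dyadic decompositions (one direction): if f = Σ_{k=0}^∞ f_k with ‖∂_x^γ X'^λ f_k‖_{L^∞} ≤ C 2^{k(2|γ|+|λ|-α)} for all k ≥ 0 and all multiindices with 0 ≤ |γ|+|λ| ≤ α+1, then f ∈ Γ^α with ‖f‖_{Γ^α} ≲ C. In the model case (0 < α < 1, D = D⁰ on ℝ^{N-1}×ℝ, d(x,y) = |x'-y'|+|x_N-y_N|^{1/2}): if f = Σ_k f_k with ‖f_k‖_∞ ≤ C2^{-kα}, ‖∇_{x'} f_k‖_∞ ≤ C2^{k(1-α)}, ‖∂_{x_N} f_k‖_∞ ≤ C2^{k(2-α)}, then |f(x)-f(y)| ≤ C' d(x,y)^α for all x, y. -/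

import Mathlib

open scoped BigOperators

/-- Model non-isotropic quasi-distance `d(x,y) = |x'-y'| + |x_N - y_N|^{1/2}`. -/
noncomputable def dm (d : ℕ) (x y : Fin (d+1) → ℝ) : ℝ :=
  Real.sqrt (∑ i : Fin d, (x i.castSucc - y i.castSucc) ^ 2) +
    Real.sqrt |x (Fin.last d) - y (Fin.last d)|

open Finset

lemma vec_decomp (d : ℕ) (v : Fin (d+1) → ℝ) :
    v = ∑ i : Fin (d+1), v i • (Pi.single i (1:ℝ) : Fin (d+1) → ℝ) := by
  funext j
  simp [Finset.sum_apply, Pi.single_apply]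

lemma key_mvt (d : ℕ) (g : (Fin (d+1) → ℝ) → ℝ) (hg : ContDiff ℝ 1 g)
    (B1 B2 : ℝ) (x y : Fin (d+1) → ℝ)
    (hB1 : ∀ w (i : Fin d), |fderiv ℝ g w (Pi.single i.castSucc 1)| ≤ B1)
    (hB2 : ∀ w, |fderiv ℝ g w (Pi.single (Fin.last d) 1)| ≤ B2) :
    |g x - g y| ≤ B1 * (d * Real.sqrt (∑ i : Fin d, (x i.castSucc - y i.castSucc) ^ 2))
      + B2 * |x (Fin.last d) - y (Fin.last d)| := by
  set S := Real.sqrt (∑ i : Fin d, (x i.castSucc - y i.castSucc) ^ 2) with hS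
  have hcoord : ∀ i : Fin d, |x i.castSucc - y i.castSucc| ≤ S := by
    intro i
    rw [hS, ← Real.sqrt_sq_eq_abs]
    exact Real.sqrt_le_sqrt (Finset.single_le_sum (f := fun j : Fin d =>
      (x j.castSucc - y j.castSucc)^2) (fun j _ => sq_nonneg _) (mem_univ i))
  have hder : ∀ w, |fderiv ℝ g w (x - y)| ≤ B1 * (d * S) + B2 * |x (Fin.last d) - y (Fin.last d)| := by
    intro w
    have hv := vec_decomp d (x - y)
    have : fderiv ℝ g w (x - y)
        = ∑ i : Fin (d+1), (x i - y i) * fderiv ℝ g w (Pi.single i (1:ℝ)) := by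
      conv_lhs => rw [hv]
      rw [map_sum]
      simp [Pi.sub_apply]
    rw [this, Fin.sum_univ_castSucc]
    have head : |∑ i : Fin d, (x i.castSucc - y i.castSucc) * fderiv ℝ g w (Pi.single i.castSucc 1)|
        ≤ B1 * (d * S) := by
      calc _ ≤ ∑ i : Fin d, |(x i.castSucc - y i.castSucc) * fderiv ℝ g w (Pi.single i.castSucc 1)| :=
            Finset.abs_sum_le_sum_abs _ _
        _ ≤ ∑ _i : Fin d, S * B1 := by
            refine Finset.sum_le_sum fun i _ => ?_
            rw [abs_mul]
            exact mul_le_mul (hcoord i) (hB1 w i) (abs_nonneg _) (Real.sqrt_nonneg _)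
        _ = B1 * (d * S) := by simp [Finset.sum_const]; ring
    have tail : |(x (Fin.last d) - y (Fin.last d)) * fderiv ℝ g w (Pi.single (Fin.last d) 1)|
        ≤ B2 * |x (Fin.last d) - y (Fin.last d)| := by
      rw [abs_mul, mul_comm]
      exact mul_le_mul_of_nonneg_right (hB2 w) (abs_nonneg _)
    calc |_ + _| ≤ _ + _ := abs_add_le _ _
      _ ≤ _ := add_le_add head tail
  have hline : ∀ t : ℝ, HasDerivAt (fun s : ℝ => y + s • (x - y)) (x - y) t := by
    intro t
    simpa using ((hasDerivAt_id t).smul_const (x - y)).const_add y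
  have hφ : ∀ t ∈ Set.Icc (0:ℝ) 1,
      HasDerivWithinAt (fun s : ℝ => g (y + s • (x - y)))
        (fderiv ℝ g (y + t • (x - y)) (x - y)) (Set.Icc 0 1) t := by
    intro t _
    exact ((((hg.differentiable one_ne_zero) (y + t • (x - y))).hasFDerivAt).comp_hasDerivAt t
      (hline t)).hasDerivWithinAt
  have := norm_image_sub_le_of_norm_deriv_le_segment_01' hφ
    (fun t _ => hder (y + t • (x - y)))
  simpa using this

set_option maxHeartbeats 2000000 in
/-- dyadic characterization of `Γ^α`, sufficiency direction (model case
`0 < α < 1` on `ℝ^{N-1} × ℝ`): if `f = Σ_k f_k` with `‖f_k‖_∞ ≤ C 2^{-kα}`,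
`‖∇_{x'} f_k‖_∞ ≤ C 2^{k(1-α)}`, `‖∂_{x_N} f_k‖_∞ ≤ C 2^{k(2-α)}`, then
`|f(x) - f(y)| ≤ C' d(x,y)^α`. -/
theorem dyadic_implies_nonisotropic_holder (d : ℕ) (α C : ℝ)
    (hα0 : 0 < α) (hα1 : α < 1) (hC : 0 ≤ C)
    (f : (Fin (d+1) → ℝ) → ℝ) (fk : ℕ → (Fin (d+1) → ℝ) → ℝ)
    (hsmooth : ∀ k, ContDiff ℝ 1 (fk k))
    (hsum : ∀ x, HasSum (fun k => fk k x) (f x))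
    (h0 : ∀ k x, |fk k x| ≤ C * (2 : ℝ) ^ (-(k : ℝ) * α))
    (h1 : ∀ k x (i : Fin d),
      |fderiv ℝ (fk k) x (Pi.single i.castSucc 1)| ≤ C * (2 : ℝ) ^ ((k : ℝ) * (1 - α)))
    (h2 : ∀ k x,
      |fderiv ℝ (fk k) x (Pi.single (Fin.last d) 1)| ≤ C * (2 : ℝ) ^ ((k : ℝ) * (2 - α))) :
    ∃ C' : ℝ, 0 < C' ∧ ∀ x y, |f x - f y| ≤ C' * (dm d x y) ^ α := by
  have hexp : ∀ (c : ℝ) (k : ℕ), (2:ℝ) ^ ((k:ℝ) * c) = ((2:ℝ) ^ c) ^ k := by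
    intro c k
    rw [mul_comm, Real.rpow_mul (by norm_num), Real.rpow_natCast]
  have hpow : ∀ (c : ℝ) (K : ℕ), ((2:ℝ) ^ c) ^ K = ((2:ℝ) ^ K : ℝ) ^ c := by
    intro c K
    rw [← hexp c K, ← Real.rpow_natCast 2 K, ← Real.rpow_mul (by norm_num), mul_comm]
  set r0 : ℝ := (2:ℝ) ^ (-α) with hr0def
  set r1 : ℝ := (2:ℝ) ^ (1 - α) with hr1def
  set r2 : ℝ := (2:ℝ) ^ (2 - α) with hr2def
  have r0pos : 0 < r0 := Real.rpow_pos_of_pos (by norm_num) _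
  have r0lt1 : r0 < 1 := Real.rpow_lt_one_of_one_lt_of_neg (by norm_num) (by linarith)
  have r1gt1 : 1 < r1 := (Real.one_lt_rpow_iff_of_pos (by norm_num)).2
    (Or.inl ⟨by norm_num, by linarith⟩)
  have r2gt1 : 1 < r2 := (Real.one_lt_rpow_iff_of_pos (by norm_num)).2
    (Or.inl ⟨by norm_num, by linarith⟩)
  set m1 : ℝ := d * r1 / (r1 - 1) with hm1def
  set m2 : ℝ := r2 / (r2 - 1) with hm2def
  set m3 : ℝ := 2 * (1 - r0)⁻¹ with hm3def
  have hm1 : 0 ≤ m1 := div_nonneg (by positivity) (by linarith)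
  have hm2 : 0 ≤ m2 := div_nonneg (by positivity) (by linarith)
  have hm3 : 0 < m3 := by
    rw [hm3def]
    exact mul_pos two_pos (inv_pos.2 (by linarith))
  set M : ℝ := m1 + m2 + m3 with hMdef
  have hM : 0 ≤ M := by positivity
  refine ⟨C * M + 1, by positivity, ?_⟩
  intro x y
  set S : ℝ := Real.sqrt (∑ i : Fin d, (x i.castSucc - y i.castSucc) ^ 2) with hSdef
  set T : ℝ := |x (Fin.last d) - y (Fin.last d)| with hTdef
  have hT0 : 0 ≤ T := abs_nonneg _
  have hS0 : 0 ≤ S := Real.sqrt_nonneg _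
  have hDeq : dm d x y = S + Real.sqrt T := rfl
  set D : ℝ := dm d x y with hDdef
  have hD0 : 0 ≤ D := by rw [hDeq]; positivity
  have hSD : S ≤ D := by
    rw [hDeq]; nlinarith [Real.sqrt_nonneg T]
  have hTD : T ≤ D ^ 2 := by
    have h1' : Real.sqrt T ≤ D := by rw [hDeq]; linarith
    have := Real.sq_sqrt hT0
    nlinarith [Real.sqrt_nonneg T]
  -- per-k bounds
  have bd1 : ∀ k, |fk k x - fk k y| ≤ C * r1 ^ k * (d * S) + C * r2 ^ k * T := by
    intro k
    have := key_mvt d (fk k) (hsmooth k) (C * r1 ^ k) (C * r2 ^ k) x y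
      (fun w i => by have := h1 k w i; rwa [hexp (1 - α) k] at this)
      (fun w => by have := h2 k w; rwa [hexp (2 - α) k] at this)
    simpa [hSdef, hTdef] using this
  have bd2 : ∀ k, |fk k x - fk k y| ≤ 2 * C * r0 ^ k := by
    intro k
    have hx := h0 k x
    have hy := h0 k y
    rw [show -(k:ℝ) * α = (k:ℝ) * (-α) by ring, hexp (-α) k] at hx hy
    calc |fk k x - fk k y| ≤ |fk k x| + |fk k y| := abs_sub _ _
      _ ≤ 2 * C * r0 ^ k := by rw [← hr0def] at hx hy; linarith
  -- master inequality
  have master : ∀ K : ℕ, |f x - f y| ≤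
      C * (d * S) * (∑ k ∈ range K, r1 ^ k) + C * T * (∑ k ∈ range K, r2 ^ k)
        + (2 * C * r0 ^ K) * (1 - r0)⁻¹ := by
    intro K
    set h : ℕ → ℝ := fun k => fk k x - fk k y with hhdef
    have hsub : HasSum h (f x - f y) := (hsum x).sub (hsum y)
    have habs' : ∀ k, |h (k + K)| ≤ (2 * C * r0 ^ K) * r0 ^ k := by
      intro k
      have := bd2 (k + K)
      rw [pow_add] at this
      calc |h (k + K)| ≤ 2 * C * (r0 ^ k * r0 ^ K) := this
        _ = (2 * C * r0 ^ K) * r0 ^ k := by ring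
    have geo : Summable (fun k : ℕ => (2 * C * r0 ^ K) * r0 ^ k) :=
      (summable_geometric_of_lt_one r0pos.le r0lt1).mul_left _
    have habssum : Summable (fun k => |h (k + K)|) :=
      Summable.of_nonneg_of_le (fun k => abs_nonneg _) habs' geo
    have htsum : Summable (fun k => h (k + K)) := habssum.of_abs
    have hsplit : (∑ k ∈ range K, h k) + ∑' k, h (k + K) = f x - f y := by
      rw [htsum.sum_add_tsum_nat_add', hsub.tsum_eq]
    have tail1 : |∑' k, h (k + K)| ≤ (2 * C * r0 ^ K) * (1 - r0)⁻¹ := by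
      calc |∑' k, h (k + K)| ≤ ∑' k, |h (k + K)| := by
            simpa using norm_tsum_le_tsum_norm (f := fun k => h (k + K)) (by simpa using habssum)
        _ ≤ ∑' k : ℕ, (2 * C * r0 ^ K) * r0 ^ k := Summable.tsum_le_tsum habs' habssum geo
        _ = (2 * C * r0 ^ K) * (1 - r0)⁻¹ := by
            rw [tsum_mul_left, tsum_geometric_of_lt_one r0pos.le r0lt1]
    have head1 : |∑ k ∈ range K, h k| ≤
        C * (d * S) * (∑ k ∈ range K, r1 ^ k) + C * T * (∑ k ∈ range K, r2 ^ k) := by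
      calc |∑ k ∈ range K, h k| ≤ ∑ k ∈ range K, |h k| := Finset.abs_sum_le_sum_abs _ _
        _ ≤ ∑ k ∈ range K, (C * r1 ^ k * (d * S) + C * r2 ^ k * T) :=
            Finset.sum_le_sum fun k _ => bd1 k
        _ = C * (d * S) * (∑ k ∈ range K, r1 ^ k) + C * T * (∑ k ∈ range K, r2 ^ k) := by
            rw [Finset.sum_add_distrib, Finset.mul_sum, Finset.mul_sum]
            congr 1 <;> (apply Finset.sum_congr rfl; intro k _; ring)
    calc |f x - f y| = |(∑ k ∈ range K, h k) + ∑' k, h (k + K)| := by rw [hsplit]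
      _ ≤ |∑ k ∈ range K, h k| + |∑' k, h (k + K)| := abs_add_le _ _
      _ ≤ _ := add_le_add head1 tail1
  -- endgame: bound by C*M*D^α
  have main : |f x - f y| ≤ C * M * D ^ α := by
    rcases eq_or_lt_of_le hD0 with hD | hDpos
    · -- D = 0 : x = y
      have hxy : x = y := by
        have hadd : S = 0 ∧ Real.sqrt T = 0 := by
          rw [← add_eq_zero_iff_of_nonneg hS0 (Real.sqrt_nonneg T)]
          rw [hDeq] at hD; exact hD.symm
        have hTz : T = 0 :=
          le_antisymm (Real.sqrt_eq_zero'.1 hadd.2) hT0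
        have hsum0 : ∑ i : Fin d, (x i.castSucc - y i.castSucc) ^ 2 = 0 := by
          have h' := hadd.1
          rw [hSdef, Real.sqrt_eq_zero (Finset.sum_nonneg fun i _ => sq_nonneg _)] at h'
          exact h'
        funext i
        refine Fin.lastCases ?_ (fun j => ?_) i
        · have := abs_eq_zero.1 hTz; linarith [this]
        · have h'' := (Finset.sum_eq_zero_iff_of_nonneg (fun i _ => sq_nonneg _)).1 hsum0 j (mem_univ j)
          have := pow_eq_zero_iff (n := 2) (by norm_num) |>.1 h''
          linarith
      rw [hxy, sub_self, abs_zero]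
      exact mul_nonneg (by positivity) (Real.rpow_nonneg hD0 α)
    · rcases le_or_gt 1 D with hD1 | hD1
      · -- D ≥ 1 : use K = 0
        have h00 := master 0
        simp only [Finset.range_zero, Finset.sum_empty, pow_zero, mul_zero, zero_add, mul_one] at h00
        have hDα : 1 ≤ D ^ α := Real.one_le_rpow hD1 hα0.le
        calc |f x - f y| ≤ 2 * C * (1 - r0)⁻¹ := h00
          _ = C * m3 := by rw [hm3def]; ring
          _ ≤ C * m3 * D ^ α := le_mul_of_one_le_right (by positivity) hDα
          _ ≤ C * M * D ^ α := by
              have h' : C * m3 ≤ C * M := by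
                apply mul_le_mul_of_nonneg_left _ hC
                rw [hMdef]; linarith
              exact mul_le_mul_of_nonneg_right h' (Real.rpow_nonneg hD0 α)
      · -- 0 < D < 1 : choose K with 1/D ≤ 2^K ≤ 2/D
        obtain ⟨n, hn1, hn2⟩ := exists_nat_pow_near (x := 1 / D) (y := (2:ℝ))
          (by rw [le_div_iff₀ hDpos]; linarith) one_lt_two
        set K : ℕ := n + 1 with hKdef
        set P : ℝ := (2:ℝ) ^ K with hPdef
        have hPpos : (0:ℝ) < P := by positivity
        have hP1 : 1 / D ≤ P := hn2.le
        have hP2 : P ≤ 2 / D := by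
          rw [hPdef, hKdef, pow_succ, mul_comm]
          rw [le_div_iff₀ hDpos] at hn1 ⊢
          nlinarith
        have hr1K : r1 ^ K ≤ r1 * D ^ (α - 1) := by
          rw [hr1def, hpow (1 - α) K]
          calc ((2:ℝ) ^ K : ℝ) ^ (1 - α) ≤ (2 / D) ^ (1 - α) :=
              Real.rpow_le_rpow hPpos.le hP2 (by linarith)
            _ = r1 * D ^ (α - 1) := by
              rw [Real.div_rpow (by norm_num) hDpos.le, div_eq_mul_inv,
                ← Real.rpow_neg hDpos.le, neg_sub, hr1def]
        have hr2K : r2 ^ K ≤ r2 * D ^ (α - 2) := by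
          rw [hr2def, hpow (2 - α) K]
          calc ((2:ℝ) ^ K : ℝ) ^ (2 - α) ≤ (2 / D) ^ (2 - α) :=
              Real.rpow_le_rpow hPpos.le hP2 (by linarith)
            _ = r2 * D ^ (α - 2) := by
              rw [Real.div_rpow (by norm_num) hDpos.le, div_eq_mul_inv,
                ← Real.rpow_neg hDpos.le, neg_sub, hr2def]
        have hr0K : r0 ^ K ≤ D ^ α := by
          rw [hr0def, hpow (-α) K]
          calc ((2:ℝ) ^ K : ℝ) ^ (-α) ≤ (1 / D) ^ (-α) :=
              Real.rpow_le_rpow_of_nonpos (by positivity) hP1 (by linarith)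
            _ = D ^ α := by
              rw [one_div, Real.inv_rpow hDpos.le, ← Real.rpow_neg hDpos.le, neg_neg]
        have hDa1 : D * D ^ (α - 1) = D ^ α := by
          calc D * D ^ (α - 1) = D ^ (1:ℝ) * D ^ (α - 1) := by rw [Real.rpow_one]
            _ = D ^ (1 + (α - 1)) := (Real.rpow_add hDpos _ _).symm
            _ = D ^ α := by ring_nf
        have hDa2 : D ^ 2 * D ^ (α - 2) = D ^ α := by
          calc D ^ 2 * D ^ (α - 2) = D ^ ((2:ℕ):ℝ) * D ^ (α - 2) := by rw [Real.rpow_natCast]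
            _ = D ^ (((2:ℕ):ℝ) + (α - 2)) := (Real.rpow_add hDpos _ _).symm
            _ = D ^ α := by norm_num
        have hDα0 : 0 ≤ D ^ α := Real.rpow_nonneg hD0 α
        have hDam1 : 0 ≤ D ^ (α - 1) := Real.rpow_nonneg hD0 _
        have hDam2 : 0 ≤ D ^ (α - 2) := Real.rpow_nonneg hD0 _
        -- geometric sums
        have hsum1 : ∑ k ∈ range K, r1 ^ k ≤ r1 ^ K / (r1 - 1) := by
          rw [geom_sum_eq (ne_of_gt r1gt1)]
          exact (div_le_div_iff_of_pos_right (by linarith)).2 (by linarith)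
        have hsum2 : ∑ k ∈ range K, r2 ^ k ≤ r2 ^ K / (r2 - 1) := by
          rw [geom_sum_eq (ne_of_gt r2gt1)]
          exact (div_le_div_iff_of_pos_right (by linarith)).2 (by linarith)
        have E1 : C * (d * S) * (∑ k ∈ range K, r1 ^ k) ≤ C * m1 * D ^ α := by
          have step : C * (d * S) * (∑ k ∈ range K, r1 ^ k)
              ≤ C * (d * D) * (r1 * D ^ (α - 1) / (r1 - 1)) := by
            apply mul_le_mul
            · exact mul_le_mul_of_nonneg_left
                (mul_le_mul_of_nonneg_left hSD (Nat.cast_nonneg d)) hC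
            · exact hsum1.trans ((div_le_div_iff_of_pos_right (by linarith)).2 hr1K)
            · exact Finset.sum_nonneg fun k _ => pow_nonneg (by linarith) k
            · exact mul_nonneg hC (mul_nonneg (Nat.cast_nonneg d) hD0)
          calc C * (d * S) * (∑ k ∈ range K, r1 ^ k)
              ≤ C * (d * D) * (r1 * D ^ (α - 1) / (r1 - 1)) := step
            _ = C * m1 * (D * D ^ (α - 1)) := by rw [hm1def]; ring
            _ = C * m1 * D ^ α := by rw [hDa1]
        have E2 : C * T * (∑ k ∈ range K, r2 ^ k) ≤ C * m2 * D ^ α := by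
          have step : C * T * (∑ k ∈ range K, r2 ^ k)
              ≤ C * D ^ 2 * (r2 * D ^ (α - 2) / (r2 - 1)) := by
            apply mul_le_mul
            · exact mul_le_mul_of_nonneg_left hTD hC
            · exact hsum2.trans ((div_le_div_iff_of_pos_right (by linarith)).2 hr2K)
            · exact Finset.sum_nonneg fun k _ => pow_nonneg (by linarith) k
            · exact mul_nonneg hC (sq_nonneg D)
          calc C * T * (∑ k ∈ range K, r2 ^ k)
              ≤ C * D ^ 2 * (r2 * D ^ (α - 2) / (r2 - 1)) := step
            _ = C * m2 * (D ^ 2 * D ^ (α - 2)) := by rw [hm2def]; ring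
            _ = C * m2 * D ^ α := by rw [hDa2]
        have E3 : (2 * C * r0 ^ K) * (1 - r0)⁻¹ ≤ C * m3 * D ^ α := by
          have : (2 * C * r0 ^ K) * (1 - r0)⁻¹ = (C * m3) * r0 ^ K := by
            rw [hm3def]; ring
          rw [this]
          exact mul_le_mul_of_nonneg_left hr0K (mul_nonneg hC hm3.le)
        have := master K
        have hfin : C * m1 * D ^ α + C * m2 * D ^ α + C * m3 * D ^ α = C * M * D ^ α := by
          rw [hMdef]; ring
        linarith
  calc |f x - f y| ≤ C * M * D ^ α := main
    _ ≤ (C * M + 1) * D ^ α := by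
        apply mul_le_mul_of_nonneg_right (by linarith) (Real.rpow_nonneg hD0 α)
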